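/- Let G be a group and let α, β be automorphisms of G. Let T_α = G ⋊_α ℤ and T_β = G ⋊_β ℤ denote the mapping tori, i.e. the semidirect products in which the generator t_α (resp. t_β) of the ℤ factor acts on G by α (resp. β). Then α and β represent conjugate elements of Out(G) — i.e. there exist an automorphism φ of G and an element g ∈ G with φ ∘ α ∘ φ⁻¹ = Ad(g) ∘ β, where Ad(g)(x) = g·x·g⁻¹ — if and only if there exists a group isomorphism ψ : T_α → T_β that carries the fiber G onto the fiber G and satisfies ψ(t_α) ∈ G·t_β (ψ is fiber and orientation preserving). -/

import Mathlib

open SemidirectProduct Multiplicative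

private lemma mappingTorus_aux {G : Type*} [Group G] (α β : MulAut G) (φ : G ≃* G) (g : G)
    (h : ∀ x, φ (α x) = g * β (φ x) * g⁻¹) (n : ℤ) (x : G) :
    (inl (φ ((α ^ n) x)) : G ⋊[zpowersHom (MulAut G) β] Multiplicative ℤ) =
      (inl g * inr (ofAdd 1)) ^ n * inl (φ x) * ((inl g * inr (ofAdd 1)) ^ n)⁻¹ := by
  set c : G ⋊[zpowersHom (MulAut G) β] Multiplicative ℤ := inl g * inr (ofAdd 1) with hc
  have base : ∀ y : G, (inl (φ (α y)) : G ⋊[zpowersHom (MulAut G) β] Multiplicative ℤ) =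
      c * inl (φ y) * c⁻¹ := by
    intro y
    have key : (inl (β (φ y)) : G ⋊[zpowersHom (MulAut G) β] Multiplicative ℤ) =
        inr (ofAdd 1) * inl (φ y) * inr (ofAdd 1)⁻¹ := by
      have := inl_aut (φ := zpowersHom (MulAut G) β) (ofAdd 1) (φ y)
      simpa using this
    rw [h y, map_mul, map_mul, key, hc]
    simp only [map_inv]
    group
  have base' : ∀ y : G, (inl (φ (α⁻¹ y)) : G ⋊[zpowersHom (MulAut G) β] Multiplicative ℤ) =
      c⁻¹ * inl (φ y) * c := by
    intro y
    have := base (α⁻¹ y)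
    rw [MulAut.apply_inv_self] at this
    rw [this]; group
  induction n using Int.induction_on generalizing x with
  | zero => simp
  | succ n ih =>
      have e : (α ^ ((n : ℤ) + 1)) x = (α ^ (n : ℤ)) (α x) := by
        rw [zpow_add_one]; rfl
      rw [e, ih (α x), base x]
      group
  | pred n ih =>
      have e : (α ^ (-(n : ℤ) - 1)) x = (α ^ (-(n : ℤ))) (α⁻¹ x) := by
        rw [zpow_sub_one]; rfl
      rw [e, ih (α⁻¹ x), base' x]
      group

/-- Two automorphisms `α, β` of a group `G` represent conjugate
elements of `Out G` if and only if there is a fiber and orientation preserving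
isomorphism between the mapping tori `G ⋊[α] ℤ` and `G ⋊[β] ℤ`. -/
theorem conj_in_out_iff_fiber_orientation_preserving_iso
    {G : Type*} [Group G] (α β : MulAut G) :
    (∃ (φ : MulAut G) (g : G), φ * α * φ⁻¹ = MulAut.conj g * β) ↔
      ∃ ψ : (G ⋊[zpowersHom (MulAut G) α] Multiplicative ℤ) ≃*
            (G ⋊[zpowersHom (MulAut G) β] Multiplicative ℤ),
        Subgroup.map ψ.toMonoidHom
            (SemidirectProduct.inl : G →*
              G ⋊[zpowersHom (MulAut G) α] Multiplicative ℤ).range =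
          (SemidirectProduct.inl : G →*
              G ⋊[zpowersHom (MulAut G) β] Multiplicative ℤ).range ∧
        ∃ g : G,
          ψ (SemidirectProduct.inr (Multiplicative.ofAdd 1)) =
            SemidirectProduct.inl g *
              SemidirectProduct.inr (Multiplicative.ofAdd 1) := by
  constructor
  · rintro ⟨φ, g, hφ⟩
    -- pointwise form of the hypothesis
    have hpt : ∀ x, φ (α x) = g * β (φ x) * g⁻¹ := by
      intro x
      have := DFunLike.congr_fun hφ (φ x)
      simpa [MulAut.mul_apply, MulAut.conj_apply, MulAut.inv_apply_self] using this
    have hpt' : ∀ x, φ.symm (β x) = φ.symm g⁻¹ * α (φ.symm x) * (φ.symm g⁻¹)⁻¹ := by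
      intro x
      have := hpt (φ.symm x)
      have h2 : α (φ.symm x) = φ.symm (g * β x * g⁻¹) := by
        apply φ.injective
        simpa [MulEquiv.apply_symm_apply] using this
      rw [h2]
      simp [map_mul, map_inv, MulEquiv.apply_symm_apply, mul_assoc]
    set c : G ⋊[zpowersHom (MulAut G) β] Multiplicative ℤ := inl g * inr (ofAdd 1) with hc
    set c' : G ⋊[zpowersHom (MulAut G) α] Multiplicative ℤ :=
      inl (φ.symm g⁻¹) * inr (ofAdd 1) with hc'
    have hcondf : ∀ h : Multiplicative ℤ,
        ((inl : G →* G ⋊[zpowersHom (MulAut G) β] Multiplicative ℤ).comp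
            φ.toMonoidHom).comp ((zpowersHom (MulAut G) α h).toMonoidHom) =
          (MulAut.conj ((zpowersHom _ c) h)).toMonoidHom.comp
            ((inl : G →* _).comp φ.toMonoidHom) := by
      intro h
      refine MonoidHom.ext fun x => ?_
      simp only [MonoidHom.comp_apply, MulEquiv.coe_toMonoidHom, zpowersHom_apply,
        MulAut.conj_apply]
      exact mappingTorus_aux α β (φ : G ≃* G) g hpt (toAdd h) x
    have hcondb : ∀ h : Multiplicative ℤ,
        ((inl : G →* G ⋊[zpowersHom (MulAut G) α] Multiplicative ℤ).comp
            φ.symm.toMonoidHom).comp ((zpowersHom (MulAut G) β h).toMonoidHom) =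
          (MulAut.conj ((zpowersHom _ c') h)).toMonoidHom.comp
            ((inl : G →* _).comp φ.symm.toMonoidHom) := by
      intro h
      refine MonoidHom.ext fun x => ?_
      simp only [MonoidHom.comp_apply, MulEquiv.coe_toMonoidHom, zpowersHom_apply,
        MulAut.conj_apply]
      exact mappingTorus_aux β α (φ.symm : G ≃* G) (φ.symm g⁻¹) hpt' (toAdd h) x
    set F : (G ⋊[zpowersHom (MulAut G) α] Multiplicative ℤ) →*
        (G ⋊[zpowersHom (MulAut G) β] Multiplicative ℤ) :=
      SemidirectProduct.lift ((inl : G →* _).comp φ.toMonoidHom) (zpowersHom _ c) hcondf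
      with hF
    set B : (G ⋊[zpowersHom (MulAut G) β] Multiplicative ℤ) →*
        (G ⋊[zpowersHom (MulAut G) α] Multiplicative ℤ) :=
      SemidirectProduct.lift ((inl : G →* _).comp φ.symm.toMonoidHom) (zpowersHom _ c') hcondb
      with hB
    have hFinl : ∀ x : G, F (inl x) = inl (φ x) := by intro x; simp [hF]
    have hBinl : ∀ x : G, B (inl x) = inl (φ.symm x) := by intro x; simp [hB]
    have hFinr : F (inr (ofAdd 1)) = c := by simp [hF]
    have hBinr : B (inr (ofAdd 1)) = c' := by simp [hB]
    have hBc : B c = inr (ofAdd 1) := by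
      rw [hc, map_mul, hBinl, hBinr, hc', ← mul_assoc, ← map_mul]
      simp
    have hFc' : F c' = inr (ofAdd 1) := by
      rw [hc', map_mul, hFinl, hFinr, hc, ← mul_assoc, ← map_mul]
      simp [MulEquiv.apply_symm_apply]
    have hBF : B.comp F = MonoidHom.id _ := by
      apply SemidirectProduct.hom_ext
      · refine MonoidHom.ext fun x => ?_
        show B (F (inl x)) = inl x
        rw [hFinl, hBinl]; simp
      · refine MonoidHom.ext_mint ?_
        show B (F (inr (ofAdd 1))) = inr (ofAdd 1)
        rw [hFinr, hBc]
    have hFB : F.comp B = MonoidHom.id _ := by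
      apply SemidirectProduct.hom_ext
      · refine MonoidHom.ext fun x => ?_
        show F (B (inl x)) = inl x
        rw [hBinl, hFinl]; simp [MulEquiv.apply_symm_apply]
      · refine MonoidHom.ext_mint ?_
        show F (B (inr (ofAdd 1))) = inr (ofAdd 1)
        rw [hBinr, hFc']
    refine ⟨MonoidHom.toMulEquiv F B hBF hFB, ?_, g, ?_⟩
    · have hψ : ∀ z, (MonoidHom.toMulEquiv F B hBF hFB).toMonoidHom z = F z := fun _ => rfl
      apply le_antisymm
      · rintro _ ⟨_, ⟨x, rfl⟩, rfl⟩
        exact ⟨φ x, by rw [hψ, hFinl]⟩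
      · rintro _ ⟨y, rfl⟩
        refine ⟨inl (φ.symm y), ⟨φ.symm y, rfl⟩, ?_⟩
        rw [hψ, hFinl]
        simp [MulEquiv.apply_symm_apply]
    · show F (inr (ofAdd 1)) = inl g * inr (ofAdd 1)
      rw [hFinr, hc]
  · rintro ⟨ψ, hmap, g, hg⟩
    -- ψ maps the fiber into the fiber, in both directions
    have hfwd : ∀ x : G, ψ (inl x) ∈
        (inl : G →* G ⋊[zpowersHom (MulAut G) β] Multiplicative ℤ).range := by
      intro x
      rw [← hmap]
      exact ⟨inl x, ⟨x, rfl⟩, rfl⟩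
    have hbwd : ∀ y : G, ψ.symm (inl y) ∈
        (inl : G →* G ⋊[zpowersHom (MulAut G) α] Multiplicative ℤ).range := by
      intro y
      have : (inl y : G ⋊[zpowersHom (MulAut G) β] Multiplicative ℤ) ∈
          Subgroup.map ψ.toMonoidHom (inl : G →* _).range := hmap ▸ ⟨y, rfl⟩
      obtain ⟨z, hz, hzy⟩ := this
      have : ψ.symm (inl y) = z := by rw [← hzy]; exact ψ.symm_apply_apply z
      rwa [this]
    have hfwd' : ∀ x : G, ψ (inl x) = inl ((ψ (inl x)).left) := by
      intro x
      obtain ⟨y, hy⟩ := hfwd x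
      rw [← hy]; simp
    have hbwd' : ∀ y : G, ψ.symm (inl y) = inl ((ψ.symm (inl y)).left) := by
      intro y
      obtain ⟨z, hz⟩ := hbwd y
      rw [← hz]; simp
    set φ : MulAut G :=
      { toFun := fun x => (ψ (inl x)).left
        invFun := fun y => (ψ.symm (inl y)).left
        left_inv := by
          intro x
          dsimp only
          have : ψ.symm (inl ((ψ (inl x)).left)) = inl x := by
            rw [← hfwd' x]; exact ψ.symm_apply_apply _
          rw [this]; simp
        right_inv := by
          intro y
          dsimp only
          have : ψ (inl ((ψ.symm (inl y)).left)) = inl y := by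
            rw [← hbwd' y]; exact ψ.apply_symm_apply _
          rw [this]; simp
        map_mul' := by
          intro x y
          have : ψ (inl (x * y)) = inl ((ψ (inl x)).left * (ψ (inl y)).left) := by
            rw [map_mul, map_mul, hfwd' x, hfwd' y, ← map_mul]
            simp
          rw [this]; simp } with hφdef
    refine ⟨φ, g, ?_⟩
    have key : ∀ x : G, φ (α x) = g * β (φ x) * g⁻¹ := by
      intro x
      have hα : (inl (α x) : G ⋊[zpowersHom (MulAut G) α] Multiplicative ℤ) =
          inr (ofAdd 1) * inl x * inr (ofAdd 1)⁻¹ := by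
        have := inl_aut (φ := zpowersHom (MulAut G) α) (ofAdd 1) x
        simpa using this
      set y : G := (ψ (inl x)).left with hydef
      have hy : ψ (inl x) = inl y := hfwd' x
      have hβ : (inl (β y) : G ⋊[zpowersHom (MulAut G) β] Multiplicative ℤ) =
          inr (ofAdd 1) * inl y * inr (ofAdd 1)⁻¹ := by
        have := inl_aut (φ := zpowersHom (MulAut G) β) (ofAdd 1) y
        simpa using this
      have step : ψ (inl (α x)) = inl (g * β y * g⁻¹) := by
        rw [hα, map_mul, map_mul, map_inv, hy, map_mul, map_mul, hβ]
        simp only [map_inv, hg]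
        group
      apply inl_injective (φ := zpowersHom (MulAut G) β)
      show inl ((ψ (inl (α x))).left) = _
      rw [← hfwd' (α x), step]
      rfl
    ext x
    have := key (φ⁻¹ x)
    simpa [MulAut.mul_apply, MulAut.conj_apply, MulAut.apply_inv_self] using this
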